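/- Let γ ∈ (0,1), let T ∈ ℕ, and let (x_t)_{0 ≤ t ≤ T} be a sequence of reals with 0 ≤ x_t for all t ≤ T, x₀ ≤ 1, and x_{t+1} ≤ x_t − γ·x_t³ for all t < T. Then x_T ≤ x₀/√(1 + 2·γ·x₀²·T). -/

import Mathlib

/-- Cubic decay bound: a nonnegative sequence with `x₀ ≤ 1` satisfying
`x_{t+1} ≤ x_t - γ x_t³` decays at rate `x_T ≤ x₀ / √(1 + 2 γ x₀² T)`. -/
theorem cubic_decay (γ : ℝ) (hγ0 : 0 < γ) (hγ1 : γ < 1) (T : ℕ) (x : ℕ → ℝ)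
    (hnn : ∀ t ≤ T, 0 ≤ x t) (hx0 : x 0 ≤ 1)
    (hrec : ∀ t < T, x (t + 1) ≤ x t - γ * x t ^ 3) :
    x T ≤ x 0 / Real.sqrt (1 + 2 * γ * x 0 ^ 2 * T) := by
  have hmono : ∀ t ≤ T, x t ≤ x 0 := by
    intro t ht
    induction t with
    | zero => exact le_rfl
    | succ n ih =>
      have hn : n ≤ T := Nat.le_of_succ_le ht
      have h1 := hrec n (by omega)
      have h2 := hnn n hn
      nlinarith [mul_nonneg (le_of_lt hγ0) (pow_nonneg h2 3), ih hn]
  have key : ∀ t ≤ T, x t ^ 2 ≤ x 0 ^ 2 / (1 + 2 * γ * x 0 ^ 2 * t) := by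
    intro t ht
    induction t with
    | zero => simp
    | succ n ih =>
      have hn : n ≤ T := Nat.le_of_succ_le ht
      have ihn := ih hn
      have ha0 : 0 ≤ x n := hnn n hn
      have ha1 : x n ≤ 1 := (hmono n hn).trans hx0
      have hb0 : 0 ≤ x (n + 1) := hnn (n + 1) ht
      have hb := hrec n (by omega)
      have hD : (0:ℝ) < 1 + 2 * γ * x 0 ^ 2 * n := by positivity
      have hDa : (0:ℝ) < 1 + 2 * γ * x n ^ 2 := by positivity
      set c : ℝ := x 0 ^ 2 / (1 + 2 * γ * x 0 ^ 2 * n) with hc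
      have hc0 : 0 ≤ c := by positivity
      -- x(n+1)^2 ≤ (x n - γ x n ^3)^2
      have hstep1 : x (n + 1) ^ 2 ≤ (x n - γ * x n ^ 3) ^ 2 := by
        have hpos : 0 ≤ x n - γ * x n ^ 3 := by nlinarith
        nlinarith
      -- (x n - γ x n^3)^2 ≤ x n^2 / (1 + 2 γ x n^2)
      have hstep2 : (x n - γ * x n ^ 3) ^ 2 ≤ x n ^ 2 / (1 + 2 * γ * x n ^ 2) := by
        rw [le_div_iff₀ hDa]
        nlinarith [sq_nonneg (x n), mul_nonneg (mul_nonneg hγ0.le hγ0.le) (pow_nonneg ha0 6),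
          mul_nonneg (mul_nonneg hγ0.le hγ0.le) (mul_nonneg (pow_nonneg ha0 6) (sub_nonneg.2 (show γ * x n ^ 2 ≤ 1 by nlinarith)))]
      -- monotonicity of y ↦ y/(1+2γy)
      have hstep3 : x n ^ 2 / (1 + 2 * γ * x n ^ 2) ≤ c / (1 + 2 * γ * c) := by
        have hDc : (0:ℝ) < 1 + 2 * γ * c := by positivity
        rw [div_le_div_iff₀ hDa hDc]
        nlinarith [ihn]
      have hstep4 : c / (1 + 2 * γ * c) = x 0 ^ 2 / (1 + 2 * γ * x 0 ^ 2 * (n + 1)) := by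
        have hDc : (0:ℝ) < 1 + 2 * γ * c := by positivity
        have hE : (0:ℝ) < 1 + 2 * γ * x 0 ^ 2 * ((n:ℝ) + 1) := by positivity
        rw [div_eq_div_iff hDc.ne' hE.ne', hc]
        field_simp
        ring
      push_cast
      calc x (n + 1) ^ 2 ≤ (x n - γ * x n ^ 3) ^ 2 := hstep1
        _ ≤ x n ^ 2 / (1 + 2 * γ * x n ^ 2) := hstep2
        _ ≤ c / (1 + 2 * γ * c) := hstep3
        _ = x 0 ^ 2 / (1 + 2 * γ * x 0 ^ 2 * (n + 1)) := hstep4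
  have hkey := key T le_rfl
  have hx0nn : 0 ≤ x 0 := hnn 0 (Nat.zero_le T)
  have hT : x T = Real.sqrt (x T ^ 2) := (Real.sqrt_sq (hnn T le_rfl)).symm
  rw [hT]
  have h1 : Real.sqrt (x T ^ 2) ≤ Real.sqrt (x 0 ^ 2 / (1 + 2 * γ * x 0 ^ 2 * T)) :=
    Real.sqrt_le_sqrt hkey
  have h2 : Real.sqrt (x 0 ^ 2 / (1 + 2 * γ * x 0 ^ 2 * T))
      = x 0 / Real.sqrt (1 + 2 * γ * x 0 ^ 2 * T) := by
    rw [Real.sqrt_div (by positivity), Real.sqrt_sq hx0nn]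
  rw [← h2]; exact h1
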